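/- arXiv:2005.11680 — 3 statements merged into one kernel-verified Lean document; each statement's English description precedes it below -/
import Mathlib

section
/- There is no tree T with leaf set {x_1,x_2,x_3,x_4} and edge weighting λ: E(T) → ℕ such that all pairwise leaf distances are positive and the exactly-2-relation graph equals the 4-cycle C_4. -/
open SimpleGraph

noncomputable def treePath {V : Type} (T : SimpleGraph V) (hT : T.IsTree) (x y : V) :
    T.Walk x y := (hT.existsUnique_path x y).choose

/-- The weighted distance between two vertices of a tree: the sum of the weights
`lam` over the edges of the unique path. -/
noncomputable def treeDist {V : Type} (T : SimpleGraph V) (hT : T.IsTree)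
    (lam : Sym2 V → ℕ) (x y : V) : ℕ :=
  ((treePath T hT x y).edges.map lam).sum

/-- A leaf of a tree: a vertex of degree at most one. -/
def IsLeaf {V : Type} (T : SimpleGraph V) (v : V) : Prop :=
  (T.neighborSet v).ncard ≤ 1

/-- `(T, lam)` explains the graph `G` w.r.t. the exactly-`k`-relation, where
`f` identifies the vertices of `G` with the leaves of `T`. -/
def ExplainedBy {α V : Type} (G : SimpleGraph α) (T : SimpleGraph V) (hT : T.IsTree)
    (lam : Sym2 V → ℕ) (f : α → V) (k : ℕ) : Prop :=
  Function.Injective f ∧ (∀ v : V, (∃ a, f a = v) ↔ IsLeaf T v) ∧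
    (∀ x y : α, G.Adj x y ↔ treeDist T hT lam (f x) (f y) = k)

/-- `G` can be explained w.r.t. the exactly-`k`-relation by some finite edge-weighted tree. -/
def Explainable {α : Type} (G : SimpleGraph α) (k : ℕ) : Prop :=
  ∃ (V : Type) (_ : Finite V) (T : SimpleGraph V) (hT : T.IsTree) (lam : Sym2 V → ℕ)
    (f : α → V), ExplainedBy G T hT lam f k

/-- `G` can be explained w.r.t. the exactly-`k`-relation by a tree in which all pairs of
distinct leaves are at positive weighted distance (discrete 0-relation). -/
def ExplainableDiscrete {α : Type} (G : SimpleGraph α) (k : ℕ) : Prop :=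
  ∃ (V : Type) (_ : Finite V) (T : SimpleGraph V) (hT : T.IsTree) (lam : Sym2 V → ℕ)
    (f : α → V), ExplainedBy G T hT lam f k ∧
      ∀ x y : α, x ≠ y → treeDist T hT lam (f x) (f y) ≠ 0

section Aux

variable {V : Type} [DecidableEq V]

lemma treePath_isPath (T : SimpleGraph V) (hT : T.IsTree) (x y : V) :
    (treePath T hT x y).IsPath :=
  (hT.existsUnique_path x y).choose_spec.1

lemma treePath_unique (T : SimpleGraph V) (hT : T.IsTree) {x y : V} (p : T.Walk x y)
    (hp : p.IsPath) : p = treePath T hT x y :=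
  (hT.existsUnique_path x y).choose_spec.2 p hp

lemma notMem_of_reachable (T : SimpleGraph V) (hT : T.IsTree) {e : Sym2 V} {x y : V}
    (h : (T.deleteEdges {e}).Reachable x y) : e ∉ (treePath T hT x y).edges := by
  obtain ⟨w⟩ := h
  have hsub : ∀ f ∈ w.bypass.edges, f ∈ T.edgeSet := by
    intro f hf
    have : f ∈ (T.deleteEdges {e}).edgeSet :=
      SimpleGraph.Walk.edges_subset_edgeSet _ (w.edges_bypass_subset hf)
    rw [SimpleGraph.edgeSet_deleteEdges] at this
    exact this.1
  have hp : (w.bypass.transfer T hsub).IsPath := (w.bypass_isPath).transfer _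
  have heq := treePath_unique T hT _ hp
  intro hmem
  rw [← heq, SimpleGraph.Walk.edges_transfer] at hmem
  have : e ∈ (T.deleteEdges {e}).edgeSet :=
    SimpleGraph.Walk.edges_subset_edgeSet _ (w.edges_bypass_subset hmem)
  rw [SimpleGraph.edgeSet_deleteEdges] at this
  exact this.2 rfl

lemma reachable_of_notMem (T : SimpleGraph V) (hT : T.IsTree) {e : Sym2 V} {x y : V}
    (h : e ∉ (treePath T hT x y).edges) : (T.deleteEdges {e}).Reachable x y := by
  have hsub : ∀ f ∈ (treePath T hT x y).edges, f ∈ (T.deleteEdges {e}).edgeSet := by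
    intro f hf
    rw [SimpleGraph.edgeSet_deleteEdges]
    exact ⟨SimpleGraph.Walk.edges_subset_edgeSet _ hf, fun hfe => h (hfe ▸ hf)⟩
  exact ((treePath T hT x y).transfer _ hsub).reachable

lemma reachable_takeUntil (T : SimpleGraph V) (hT : T.IsTree) {e : Sym2 V} {x y c : V}
    (hc : c ∈ (treePath T hT x y).support)
    (h : e ∉ (treePath T hT x y).edges) : (T.deleteEdges {e}).Reachable x c := by
  have hsub : ∀ f ∈ ((treePath T hT x y).takeUntil c hc).edges,
      f ∈ (T.deleteEdges {e}).edgeSet := by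
    intro f hf
    have hf' : f ∈ (treePath T hT x y).edges :=
      SimpleGraph.Walk.edges_takeUntil_subset _ hc hf
    rw [SimpleGraph.edgeSet_deleteEdges]
    exact ⟨SimpleGraph.Walk.edges_subset_edgeSet _ hf', fun hfe => h (hfe ▸ hf')⟩
  exact (((treePath T hT x y).takeUntil c hc).transfer _ hsub).reachable

lemma reach_endpoints (T : SimpleGraph V) (hT : T.IsTree) {a b : V} (hab : T.Adj a b) (v : V) :
    (T.deleteEdges {s(a,b)}).Reachable v a ∨ (T.deleteEdges {s(a,b)}).Reachable v b := by
  by_cases h : s(a,b) ∈ (treePath T hT v a).edges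
  · right
    have hb : b ∈ (treePath T hT v a).support :=
      SimpleGraph.Walk.snd_mem_support_of_mem_edges _ h
    have hnd : s(a,b) ∉ ((treePath T hT v a).takeUntil b hb).edges := by
      intro he'
      have ha : a ∈ ((treePath T hT v a).takeUntil b hb).support :=
        SimpleGraph.Walk.fst_mem_support_of_mem_edges _ he'
      have hsp := (treePath_isPath T hT v a).support_nodup
      rw [← SimpleGraph.Walk.take_spec _ hb, SimpleGraph.Walk.support_append] at hsp
      have ha2 : a ∈ ((treePath T hT v a).dropUntil b hb).support.tail := by
        have h1 : a ∈ ((treePath T hT v a).dropUntil b hb).support :=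
          SimpleGraph.Walk.end_mem_support _
        rw [SimpleGraph.Walk.support_eq_cons] at h1
        rcases List.mem_cons.mp h1 with h1 | h1
        · exact absurd h1 hab.ne
        · exact h1
      exact (List.nodup_append'.mp hsp).2.2 ha ha2
    have hsub : ∀ f ∈ ((treePath T hT v a).takeUntil b hb).edges,
        f ∈ (T.deleteEdges {s(a,b)}).edgeSet := by
      intro f hf
      rw [SimpleGraph.edgeSet_deleteEdges]
      exact ⟨SimpleGraph.Walk.edges_subset_edgeSet _
        (SimpleGraph.Walk.edges_takeUntil_subset _ hb hf),
        fun hfe => hnd (hfe ▸ hf)⟩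
    exact ((((treePath T hT v a).takeUntil b hb)).transfer _ hsub).reachable
  · exact Or.inl (reachable_of_notMem T hT h)

lemma sides (T : SimpleGraph V) (hT : T.IsTree) : ∀ e ∈ T.edgeSet, ∃ σ : V → Prop,
    (∀ x y, (T.deleteEdges {e}).Reachable x y → (σ x ↔ σ y)) ∧
    (∀ x y, (e ∈ (treePath T hT x y).edges ↔ ¬(σ x ↔ σ y))) := by
  intro e
  induction e using Sym2.ind with
  | _ a b =>
  intro he
  have hab : T.Adj a b := T.mem_edgeSet.mp he
  refine ⟨fun v => (T.deleteEdges {s(a,b)}).Reachable v a, ?_, ?_⟩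
  · intro x y h
    exact ⟨fun hx => (h.symm.trans hx), fun hy => h.trans hy⟩
  · intro x y
    constructor
    · intro hmem hiff
      apply notMem_of_reachable T hT ?_ hmem
      by_cases hxa : (T.deleteEdges {s(a,b)}).Reachable x a
      · exact hxa.trans (hiff.mp hxa).symm
      · have hxb := (reach_endpoints T hT hab x).resolve_left hxa
        have hyb := (reach_endpoints T hT hab y).resolve_left (fun h => hxa (hiff.mpr h))
        exact hxb.trans hyb.symm
    · intro hne
      by_contra hmem
      have h := reachable_of_notMem T hT hmem
      exact hne ⟨fun hx => h.symm.trans hx, fun hy => h.trans hy⟩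

lemma treePath_adj (T : SimpleGraph V) (hT : T.IsTree) {c d : V} (h : T.Adj c d) :
    (treePath T hT c d).edges = [s(c,d)] := by
  have hp : (SimpleGraph.Walk.cons h SimpleGraph.Walk.nil).IsPath := by
    simp [SimpleGraph.Walk.isPath_def, h.ne]
  rw [← treePath_unique T hT _ hp]
  simp

lemma laminar (T : SimpleGraph V) (hT : T.IsTree) {x0 x1 x2 x3 : V} {e f : Sym2 V}
    (he : e ∈ T.edgeSet) (hf : f ∈ T.edgeSet)
    (h1 : e ∉ (treePath T hT x0 x1).edges) (h2 : e ∉ (treePath T hT x2 x3).edges)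
    (h3 : e ∈ (treePath T hT x0 x2).edges)
    (h4 : f ∈ (treePath T hT x0 x1).edges) (h5 : f ∈ (treePath T hT x2 x3).edges) : False := by
  obtain ⟨σ, hR, hσ⟩ := sides T hT e he
  have hef : e ≠ f := by rintro rfl; exact h1 h4
  have s01 : σ x0 ↔ σ x1 := by by_contra h; exact h1 ((hσ x0 x1).mpr h)
  have s23 : σ x2 ↔ σ x3 := by by_contra h; exact h2 ((hσ x2 x3).mpr h)
  have s02 : ¬ (σ x0 ↔ σ x2) := (hσ x0 x2).mp h3
  revert hf h4 h5 hef
  induction f using Sym2.ind with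
  | _ c d =>
  intro hf h4 h5 hef
  have hcd : T.Adj c d := T.mem_edgeSet.mp hf
  have scd : σ c ↔ σ d := by
    apply hR
    apply reachable_of_notMem
    rw [treePath_adj T hT hcd]
    simpa using hef
  have key : ∀ z w : V, ¬(σ z ↔ σ c) → ¬(σ w ↔ σ c) → s(c,d) ∉ (treePath T hT z w).edges := by
    intro z w hz hw hmem
    have hzw : σ z ↔ σ w := by
      constructor
      · intro hzv; by_contra hwv
        rcases em (σ c) with hc | hc
        · exact hz (iff_of_true hzv hc)
        · exact hw (iff_of_false hwv hc)
      · intro hwv; by_contra hzv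
        rcases em (σ c) with hc | hc
        · exact hw (iff_of_true hwv hc)
        · exact hz (iff_of_false hzv hc)
    have hezw : e ∉ (treePath T hT z w).edges := fun h => (hσ z w).mp h hzw
    have hcsup : c ∈ (treePath T hT z w).support :=
      SimpleGraph.Walk.fst_mem_support_of_mem_edges _ hmem
    exact hz (hR z c (reachable_takeUntil T hT hcsup hezw))
  by_cases h0 : σ c ↔ σ x0
  · exact key x2 x3 (fun h => s02 (h.trans h0).symm)
      (fun h => s02 ((s23.trans h).trans h0).symm) h5
  · exact key x0 x1 (fun h => h0 h.symm) (fun h => h0 (s01.trans h).symm) h4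

lemma treeDist_symm (T : SimpleGraph V) (hT : T.IsTree) (lam : Sym2 V → ℕ) (x y : V) :
    treeDist T hT lam x y = treeDist T hT lam y x := by
  have h : treePath T hT y x = (treePath T hT x y).reverse :=
    (treePath_unique T hT _ ((treePath_isPath T hT x y).reverse)).symm
  unfold treeDist
  rw [h, SimpleGraph.Walk.edges_reverse, List.map_reverse, List.sum_reverse]

end Aux

lemma iff_of_notIff {p q r : Prop} (h1 : ¬(p ↔ q)) (h2 : ¬(p ↔ r)) : q ↔ r := by tauto

/-- The 4-cycle cannot be explained w.r.t. the exactly-2-relation by any weighted tree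
with all pairwise leaf distances positive. -/
theorem stmt10 : ¬ ExplainableDiscrete (cycleGraph 4) 2 := by
  classical
  rintro ⟨V, _, T, hT, lam, f, ⟨-, -, hadj⟩, hdisc⟩
  have d01 : treeDist T hT lam (f 0) (f 1) = 2 := (hadj 0 1).mp (by decide)
  have d12 : treeDist T hT lam (f 1) (f 2) = 2 := (hadj 1 2).mp (by decide)
  have d23 : treeDist T hT lam (f 2) (f 3) = 2 := (hadj 2 3).mp (by decide)
  have d03 : treeDist T hT lam (f 0) (f 3) = 2 := by
    rw [treeDist_symm]; exact (hadj 3 0).mp (by decide)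
  have d02ne : treeDist T hT lam (f 0) (f 2) ≠ 2 := fun h =>
    (by decide : ¬ (cycleGraph 4).Adj 0 2) ((hadj 0 2).mpr h)
  have d13ne : treeDist T hT lam (f 1) (f 3) ≠ 2 := fun h =>
    (by decide : ¬ (cycleGraph 4).Adj 1 3) ((hadj 1 3).mpr h)
  have d02pos : treeDist T hT lam (f 0) (f 2) ≠ 0 := hdisc 0 2 (by decide)
  have d13pos : treeDist T hT lam (f 1) (f 3) ≠ 0 := hdisc 1 3 (by decide)
  set S : Finset (Sym2 V) :=
    (treePath T hT (f 0) (f 1)).edges.toFinset ∪ (treePath T hT (f 0) (f 2)).edges.toFinset ∪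
    (treePath T hT (f 0) (f 3)).edges.toFinset ∪ (treePath T hT (f 1) (f 2)).edges.toFinset ∪
    (treePath T hT (f 1) (f 3)).edges.toFinset ∪ (treePath T hT (f 2) (f 3)).edges.toFinset
    with hS
  have hmemS : ∀ a : Sym2 V,
      a ∈ S ↔ (a ∈ (treePath T hT (f 0) (f 1)).edges ∨ a ∈ (treePath T hT (f 0) (f 2)).edges ∨
        a ∈ (treePath T hT (f 0) (f 3)).edges ∨ a ∈ (treePath T hT (f 1) (f 2)).edges ∨
        a ∈ (treePath T hT (f 1) (f 3)).edges ∨ a ∈ (treePath T hT (f 2) (f 3)).edges) := by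
    intro a
    rw [hS]
    simp only [Finset.mem_union, List.mem_toFinset]
    tauto
  have hSedge : ∀ e ∈ S, e ∈ T.edgeSet := by
    intro e he
    rw [hmemS] at he
    rcases he with h | h | h | h | h | h <;> exact SimpleGraph.Walk.edges_subset_edgeSet _ h
  have sub01 : (treePath T hT (f 0) (f 1)).edges.toFinset ⊆ S := by
    intro a ha; rw [List.mem_toFinset] at ha; rw [hmemS]; tauto
  have sub02 : (treePath T hT (f 0) (f 2)).edges.toFinset ⊆ S := by
    intro a ha; rw [List.mem_toFinset] at ha; rw [hmemS]; tauto
  have sub03 : (treePath T hT (f 0) (f 3)).edges.toFinset ⊆ S := by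
    intro a ha; rw [List.mem_toFinset] at ha; rw [hmemS]; tauto
  have sub12 : (treePath T hT (f 1) (f 2)).edges.toFinset ⊆ S := by
    intro a ha; rw [List.mem_toFinset] at ha; rw [hmemS]; tauto
  have sub13 : (treePath T hT (f 1) (f 3)).edges.toFinset ⊆ S := by
    intro a ha; rw [List.mem_toFinset] at ha; rw [hmemS]; tauto
  have sub23 : (treePath T hT (f 2) (f 3)).edges.toFinset ⊆ S := by
    intro a ha; rw [List.mem_toFinset] at ha; rw [hmemS]; tauto
  have hd : ∀ x y : V, (treePath T hT x y).edges.toFinset ⊆ S →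
      treeDist T hT lam x y =
        ∑ e ∈ S, if e ∈ (treePath T hT x y).edges then lam e else 0 := by
    intro x y hxy
    have hnd := (treePath_isPath T hT x y).isTrail.edges_nodup
    have h1 : (∑ e ∈ S, if e ∈ (treePath T hT x y).edges then lam e else 0)
        = ∑ e ∈ S, if e ∈ (treePath T hT x y).edges.toFinset then lam e else 0 := by
      apply Finset.sum_congr rfl
      intro e _
      simp [List.mem_toFinset]
    rw [h1, Finset.sum_ite_mem, Finset.inter_eq_right.mpr hxy]
    unfold treeDist
    rw [← List.sum_toFinset lam hnd]
  -- per-vertex-pair membership abbreviations (as propositions on edges)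
  have e01 : treeDist T hT lam (f 0) (f 1) =
      (∑ e ∈ S, if (e ∈ (treePath T hT (f 0) (f 1)).edges) ∧ (e ∈ (treePath T hT (f 0) (f 2)).edges) ∧ (e ∈ (treePath T hT (f 0) (f 3)).edges) then lam e else 0)
    + (∑ e ∈ S, if (e ∈ (treePath T hT (f 0) (f 1)).edges) ∧ ¬(e ∈ (treePath T hT (f 0) (f 2)).edges) ∧ ¬(e ∈ (treePath T hT (f 0) (f 3)).edges) then lam e else 0)
    + (∑ e ∈ S, if (e ∈ (treePath T hT (f 0) (f 1)).edges) ∧ ¬(e ∈ (treePath T hT (f 0) (f 2)).edges) ∧ (e ∈ (treePath T hT (f 0) (f 3)).edges) then lam e else 0)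
    + (∑ e ∈ S, if (e ∈ (treePath T hT (f 0) (f 1)).edges) ∧ (e ∈ (treePath T hT (f 0) (f 2)).edges) ∧ ¬(e ∈ (treePath T hT (f 0) (f 3)).edges) then lam e else 0) := by
    rw [hd (f 0) (f 1) sub01, ← Finset.sum_add_distrib, ← Finset.sum_add_distrib,
      ← Finset.sum_add_distrib]
    apply Finset.sum_congr rfl
    intro e _
    by_cases hA : e ∈ (treePath T hT (f 0) (f 1)).edges <;>
      by_cases hB : e ∈ (treePath T hT (f 0) (f 2)).edges <;>
      by_cases hC : e ∈ (treePath T hT (f 0) (f 3)).edges <;>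
      simp [hA, hB, hC]
  have e02 : treeDist T hT lam (f 0) (f 2) =
      (∑ e ∈ S, if (e ∈ (treePath T hT (f 0) (f 1)).edges) ∧ (e ∈ (treePath T hT (f 0) (f 2)).edges) ∧ (e ∈ (treePath T hT (f 0) (f 3)).edges) then lam e else 0)
    + (∑ e ∈ S, if ¬(e ∈ (treePath T hT (f 0) (f 1)).edges) ∧ (e ∈ (treePath T hT (f 0) (f 2)).edges) ∧ ¬(e ∈ (treePath T hT (f 0) (f 3)).edges) then lam e else 0)
    + (∑ e ∈ S, if ¬(e ∈ (treePath T hT (f 0) (f 1)).edges) ∧ (e ∈ (treePath T hT (f 0) (f 2)).edges) ∧ (e ∈ (treePath T hT (f 0) (f 3)).edges) then lam e else 0)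
    + (∑ e ∈ S, if (e ∈ (treePath T hT (f 0) (f 1)).edges) ∧ (e ∈ (treePath T hT (f 0) (f 2)).edges) ∧ ¬(e ∈ (treePath T hT (f 0) (f 3)).edges) then lam e else 0) := by
    rw [hd (f 0) (f 2) sub02, ← Finset.sum_add_distrib, ← Finset.sum_add_distrib,
      ← Finset.sum_add_distrib]
    apply Finset.sum_congr rfl
    intro e _
    by_cases hA : e ∈ (treePath T hT (f 0) (f 1)).edges <;>
      by_cases hB : e ∈ (treePath T hT (f 0) (f 2)).edges <;>
      by_cases hC : e ∈ (treePath T hT (f 0) (f 3)).edges <;>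
      simp [hA, hB, hC]
  have e03 : treeDist T hT lam (f 0) (f 3) =
      (∑ e ∈ S, if (e ∈ (treePath T hT (f 0) (f 1)).edges) ∧ (e ∈ (treePath T hT (f 0) (f 2)).edges) ∧ (e ∈ (treePath T hT (f 0) (f 3)).edges) then lam e else 0)
    + (∑ e ∈ S, if ¬(e ∈ (treePath T hT (f 0) (f 1)).edges) ∧ ¬(e ∈ (treePath T hT (f 0) (f 2)).edges) ∧ (e ∈ (treePath T hT (f 0) (f 3)).edges) then lam e else 0)
    + (∑ e ∈ S, if ¬(e ∈ (treePath T hT (f 0) (f 1)).edges) ∧ (e ∈ (treePath T hT (f 0) (f 2)).edges) ∧ (e ∈ (treePath T hT (f 0) (f 3)).edges) then lam e else 0)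
    + (∑ e ∈ S, if (e ∈ (treePath T hT (f 0) (f 1)).edges) ∧ ¬(e ∈ (treePath T hT (f 0) (f 2)).edges) ∧ (e ∈ (treePath T hT (f 0) (f 3)).edges) then lam e else 0) := by
    rw [hd (f 0) (f 3) sub03, ← Finset.sum_add_distrib, ← Finset.sum_add_distrib,
      ← Finset.sum_add_distrib]
    apply Finset.sum_congr rfl
    intro e _
    by_cases hA : e ∈ (treePath T hT (f 0) (f 1)).edges <;>
      by_cases hB : e ∈ (treePath T hT (f 0) (f 2)).edges <;>
      by_cases hC : e ∈ (treePath T hT (f 0) (f 3)).edges <;>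
      simp [hA, hB, hC]
  have e12 : treeDist T hT lam (f 1) (f 2) =
      (∑ e ∈ S, if (e ∈ (treePath T hT (f 0) (f 1)).edges) ∧ ¬(e ∈ (treePath T hT (f 0) (f 2)).edges) ∧ ¬(e ∈ (treePath T hT (f 0) (f 3)).edges) then lam e else 0)
    + (∑ e ∈ S, if ¬(e ∈ (treePath T hT (f 0) (f 1)).edges) ∧ (e ∈ (treePath T hT (f 0) (f 2)).edges) ∧ ¬(e ∈ (treePath T hT (f 0) (f 3)).edges) then lam e else 0)
    + (∑ e ∈ S, if ¬(e ∈ (treePath T hT (f 0) (f 1)).edges) ∧ (e ∈ (treePath T hT (f 0) (f 2)).edges) ∧ (e ∈ (treePath T hT (f 0) (f 3)).edges) then lam e else 0)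
    + (∑ e ∈ S, if (e ∈ (treePath T hT (f 0) (f 1)).edges) ∧ ¬(e ∈ (treePath T hT (f 0) (f 2)).edges) ∧ (e ∈ (treePath T hT (f 0) (f 3)).edges) then lam e else 0) := by
    rw [hd (f 1) (f 2) sub12, ← Finset.sum_add_distrib, ← Finset.sum_add_distrib,
      ← Finset.sum_add_distrib]
    apply Finset.sum_congr rfl
    intro e he
    obtain ⟨σ, hR, hσ⟩ := sides T hT e (hSedge e he)
    by_cases k0 : σ (f 0) <;> by_cases k1 : σ (f 1) <;> by_cases k2 : σ (f 2) <;>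
      by_cases k3 : σ (f 3) <;> simp [hσ, k0, k1, k2, k3]
  have e13 : treeDist T hT lam (f 1) (f 3) =
      (∑ e ∈ S, if (e ∈ (treePath T hT (f 0) (f 1)).edges) ∧ ¬(e ∈ (treePath T hT (f 0) (f 2)).edges) ∧ ¬(e ∈ (treePath T hT (f 0) (f 3)).edges) then lam e else 0)
    + (∑ e ∈ S, if ¬(e ∈ (treePath T hT (f 0) (f 1)).edges) ∧ ¬(e ∈ (treePath T hT (f 0) (f 2)).edges) ∧ (e ∈ (treePath T hT (f 0) (f 3)).edges) then lam e else 0)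
    + (∑ e ∈ S, if ¬(e ∈ (treePath T hT (f 0) (f 1)).edges) ∧ (e ∈ (treePath T hT (f 0) (f 2)).edges) ∧ (e ∈ (treePath T hT (f 0) (f 3)).edges) then lam e else 0)
    + (∑ e ∈ S, if (e ∈ (treePath T hT (f 0) (f 1)).edges) ∧ (e ∈ (treePath T hT (f 0) (f 2)).edges) ∧ ¬(e ∈ (treePath T hT (f 0) (f 3)).edges) then lam e else 0) := by
    rw [hd (f 1) (f 3) sub13, ← Finset.sum_add_distrib, ← Finset.sum_add_distrib,
      ← Finset.sum_add_distrib]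
    apply Finset.sum_congr rfl
    intro e he
    obtain ⟨σ, hR, hσ⟩ := sides T hT e (hSedge e he)
    by_cases k0 : σ (f 0) <;> by_cases k1 : σ (f 1) <;> by_cases k2 : σ (f 2) <;>
      by_cases k3 : σ (f 3) <;> simp [hσ, k0, k1, k2, k3]
  have e23 : treeDist T hT lam (f 2) (f 3) =
      (∑ e ∈ S, if ¬(e ∈ (treePath T hT (f 0) (f 1)).edges) ∧ (e ∈ (treePath T hT (f 0) (f 2)).edges) ∧ ¬(e ∈ (treePath T hT (f 0) (f 3)).edges) then lam e else 0)
    + (∑ e ∈ S, if ¬(e ∈ (treePath T hT (f 0) (f 1)).edges) ∧ ¬(e ∈ (treePath T hT (f 0) (f 2)).edges) ∧ (e ∈ (treePath T hT (f 0) (f 3)).edges) then lam e else 0)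
    + (∑ e ∈ S, if (e ∈ (treePath T hT (f 0) (f 1)).edges) ∧ ¬(e ∈ (treePath T hT (f 0) (f 2)).edges) ∧ (e ∈ (treePath T hT (f 0) (f 3)).edges) then lam e else 0)
    + (∑ e ∈ S, if (e ∈ (treePath T hT (f 0) (f 1)).edges) ∧ (e ∈ (treePath T hT (f 0) (f 2)).edges) ∧ ¬(e ∈ (treePath T hT (f 0) (f 3)).edges) then lam e else 0) := by
    rw [hd (f 2) (f 3) sub23, ← Finset.sum_add_distrib, ← Finset.sum_add_distrib,
      ← Finset.sum_add_distrib]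
    apply Finset.sum_congr rfl
    intro e he
    obtain ⟨σ, hR, hσ⟩ := sides T hT e (hSedge e he)
    by_cases k0 : σ (f 0) <;> by_cases k1 : σ (f 1) <;> by_cases k2 : σ (f 2) <;>
      by_cases k3 : σ (f 3) <;> simp [hσ, k0, k1, k2, k3]
  -- laminarity: the {01|23}-split sum and the {03|12}-split sum cannot both be nonzero
  have hpr :
      (∑ e ∈ S, if ¬(e ∈ (treePath T hT (f 0) (f 1)).edges) ∧ (e ∈ (treePath T hT (f 0) (f 2)).edges) ∧ (e ∈ (treePath T hT (f 0) (f 3)).edges) then lam e else 0) = 0 ∨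
      (∑ e ∈ S, if (e ∈ (treePath T hT (f 0) (f 1)).edges) ∧ (e ∈ (treePath T hT (f 0) (f 2)).edges) ∧ ¬(e ∈ (treePath T hT (f 0) (f 3)).edges) then lam e else 0) = 0 := by
    by_contra hcon
    push_neg at hcon
    obtain ⟨hp, hr⟩ := hcon
    obtain ⟨ep, hepS, hep⟩ := Finset.exists_ne_zero_of_sum_ne_zero hp
    obtain ⟨er, herS, her⟩ := Finset.exists_ne_zero_of_sum_ne_zero hr
    have hP : ¬(ep ∈ (treePath T hT (f 0) (f 1)).edges) ∧
        (ep ∈ (treePath T hT (f 0) (f 2)).edges) ∧ (ep ∈ (treePath T hT (f 0) (f 3)).edges) := by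
      by_contra hc; rw [if_neg hc] at hep; exact hep rfl
    have hQ : (er ∈ (treePath T hT (f 0) (f 1)).edges) ∧
        (er ∈ (treePath T hT (f 0) (f 2)).edges) ∧ ¬(er ∈ (treePath T hT (f 0) (f 3)).edges) := by
      by_contra hc; rw [if_neg hc] at her; exact her rfl
    obtain ⟨σ, hRp, hσp⟩ := sides T hT ep (hSedge ep hepS)
    have hp23 : ep ∉ (treePath T hT (f 2) (f 3)).edges := by
      intro hmem
      exact (hσp (f 2) (f 3)).mp hmem
        (iff_of_notIff ((hσp _ _).mp hP.2.1) ((hσp _ _).mp hP.2.2))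
    obtain ⟨τ, hRr, hτ⟩ := sides T hT er (hSedge er herS)
    have h03 : τ (f 0) ↔ τ (f 3) := not_not.mp (fun hh => hQ.2.2 ((hτ _ _).mpr hh))
    have hr23 : er ∈ (treePath T hT (f 2) (f 3)).edges := by
      apply (hτ _ _).mpr
      intro h
      exact (hτ _ _).mp hQ.2.1 (h03.trans h.symm)
    exact laminar T hT (hSedge ep hepS) (hSedge er herS) hP.1 hp23 hP.2.1 hQ.1 hr23
  -- name the seven class sums and finish by arithmetic
  set n0 := ∑ e ∈ S, if (e ∈ (treePath T hT (f 0) (f 1)).edges) ∧ (e ∈ (treePath T hT (f 0) (f 2)).edges) ∧ (e ∈ (treePath T hT (f 0) (f 3)).edges) then lam e else 0 with hn0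
  set n1 := ∑ e ∈ S, if (e ∈ (treePath T hT (f 0) (f 1)).edges) ∧ ¬(e ∈ (treePath T hT (f 0) (f 2)).edges) ∧ ¬(e ∈ (treePath T hT (f 0) (f 3)).edges) then lam e else 0 with hn1
  set n2 := ∑ e ∈ S, if ¬(e ∈ (treePath T hT (f 0) (f 1)).edges) ∧ (e ∈ (treePath T hT (f 0) (f 2)).edges) ∧ ¬(e ∈ (treePath T hT (f 0) (f 3)).edges) then lam e else 0 with hn2
  set n3 := ∑ e ∈ S, if ¬(e ∈ (treePath T hT (f 0) (f 1)).edges) ∧ ¬(e ∈ (treePath T hT (f 0) (f 2)).edges) ∧ (e ∈ (treePath T hT (f 0) (f 3)).edges) then lam e else 0 with hn3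
  set np := ∑ e ∈ S, if ¬(e ∈ (treePath T hT (f 0) (f 1)).edges) ∧ (e ∈ (treePath T hT (f 0) (f 2)).edges) ∧ (e ∈ (treePath T hT (f 0) (f 3)).edges) then lam e else 0 with hnp
  set nq := ∑ e ∈ S, if (e ∈ (treePath T hT (f 0) (f 1)).edges) ∧ ¬(e ∈ (treePath T hT (f 0) (f 2)).edges) ∧ (e ∈ (treePath T hT (f 0) (f 3)).edges) then lam e else 0 with hnq
  set nr := ∑ e ∈ S, if (e ∈ (treePath T hT (f 0) (f 1)).edges) ∧ (e ∈ (treePath T hT (f 0) (f 2)).edges) ∧ ¬(e ∈ (treePath T hT (f 0) (f 3)).edges) then lam e else 0 with hnr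
  have g01 : n0 + n1 + nq + nr = 2 := e01.symm.trans d01
  have g12 : n1 + n2 + np + nq = 2 := e12.symm.trans d12
  have g23 : n2 + n3 + nq + nr = 2 := e23.symm.trans d23
  have g03 : n0 + n3 + np + nq = 2 := e03.symm.trans d03
  have g02ne : n0 + n2 + np + nr ≠ 2 := fun h => d02ne (e02.trans h)
  have g02pos : n0 + n2 + np + nr ≠ 0 := fun h => d02pos (e02.trans h)
  have g13ne : n1 + n3 + np + nr ≠ 2 := fun h => d13ne (e13.trans h)
  have g13pos : n1 + n3 + np + nr ≠ 0 := fun h => d13pos (e13.trans h)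
  rcases hpr with h | h <;> omega
end

section
/- For every p ≥ 5, the cycle C_p cannot be explained by any tree T with leaf set V(C_p) and non-negative integer edge weights with respect to the exactly-2-relation (regardless of whether distinct leaves may be at distance 0). -/
open SimpleGraph

namespace Aux
variable {V : Type} {T : SimpleGraph V} (hT : T.IsTree) (lam : Sym2 V → ℕ)

lemma tp_isPath (x y : V) : (treePath T hT x y).IsPath :=
  (hT.existsUnique_path x y).choose_spec.1

lemma tp_unique {x y : V} (p : T.Walk x y) (hp : p.IsPath) : p = treePath T hT x y :=
  (hT.existsUnique_path x y).choose_spec.2 p hp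

lemma dist_eq {x y : V} (p : T.Walk x y) (hp : p.IsPath) :
    treeDist T hT lam x y = (p.edges.map lam).sum := by
  rw [treeDist, ← tp_unique hT p hp]

lemma dist_symm (x y : V) : treeDist T hT lam x y = treeDist T hT lam y x := by
  rw [dist_eq hT lam ((treePath T hT y x).reverse) ((tp_isPath hT y x).reverse)]
  rw [Walk.edges_reverse, List.map_reverse, List.sum_reverse]
  rfl

lemma mem_support_symm {x y w : V} (h : w ∈ (treePath T hT x y).support) :
    w ∈ (treePath T hT y x).support := by
  rw [← tp_unique hT (treePath T hT y x).reverse ((tp_isPath hT y x).reverse),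
    Walk.support_reverse, List.mem_reverse] at h
  exact h

lemma append_isPath {x w y : V} {p : T.Walk x w} {q : T.Walk w y} (hp : p.IsPath) (hq : q.IsPath)
    (hint : ∀ u, u ∈ p.support → u ∈ q.support → u = w) : (p.append q).IsPath := by
  rw [Walk.isPath_def, Walk.support_append]
  refine List.Nodup.append hp.support_nodup hq.support_nodup.tail ?_
  intro u hu hu'
  have huq : u ∈ q.support := by
    rw [q.support_eq_cons]; exact List.mem_cons_of_mem _ hu'
  have : u = w := hint u hu huq
  subst this
  have := hq.support_nodup
  rw [q.support_eq_cons] at this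
  exact (List.nodup_cons.mp this).1 hu'

variable [DecidableEq V]

lemma tp_takeUntil {x y w : V} (h : w ∈ (treePath T hT x y).support) :
    (treePath T hT x y).takeUntil w h = treePath T hT x w :=
  tp_unique hT _ ((tp_isPath hT x y).takeUntil h)

lemma tp_dropUntil {x y w : V} (h : w ∈ (treePath T hT x y).support) :
    (treePath T hT x y).dropUntil w h = treePath T hT w y :=
  tp_unique hT _ ((tp_isPath hT x y).dropUntil h)

lemma dist_split {x y w : V} (h : w ∈ (treePath T hT x y).support) :
    treeDist T hT lam x y = treeDist T hT lam x w + treeDist T hT lam w y := by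
  rw [treeDist, ← Walk.take_spec (treePath T hT x y) h, Walk.edges_append, List.map_append,
    List.sum_append, tp_takeUntil hT h, tp_dropUntil hT h]
  rfl

lemma take_drop_inter {x y v : V} {P : T.Walk x y} (hP : P.IsPath) (hv : v ∈ P.support) :
    ∀ w, w ∈ (P.takeUntil v hv).support → w ∈ (P.dropUntil v hv).support → w = v := by
  intro w hw hw'
  have hnd : (((P.takeUntil v hv).support) ++ ((P.dropUntil v hv).support.tail)).Nodup := by
    rw [← Walk.support_append, Walk.take_spec]; exact hP.support_nodup
  rcases List.mem_cons.mp ((P.dropUntil v hv).support_eq_cons ▸ hw') with h | h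
  · exact h
  · exact absurd h ((List.nodup_append'.mp hnd).2.2 hw)

lemma gate (c y z : V) : ∃ m, m ∈ (treePath T hT c y).support ∧
    m ∈ (treePath T hT c z).support ∧ m ∈ (treePath T hT y z).support ∧
    ∀ w, w ∈ (treePath T hT m z).support → w ∈ (treePath T hT c y).support → w = m := by
  classical
  set P := treePath T hT c y with hP
  set Q := treePath T hT c z with hQ
  set S := Q.support.filter (fun u => decide (u ∈ P.support)) with hS
  have hcS : c ∈ S := by
    rw [hS, List.mem_filter]
    exact ⟨Q.start_mem_support, by simp [P.start_mem_support]⟩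
  have hSne : S ≠ [] := List.ne_nil_of_mem hcS
  obtain ⟨m, hm⟩ : ∃ m, S.getLast? = some m := by
    cases h : S.getLast? with
    | none => exact absurd (List.getLast?_eq_none_iff.mp h) hSne
    | some a => exact ⟨a, rfl⟩
  have hmS : m ∈ S := List.mem_of_getLast? hm
  have hmQ : m ∈ Q.support := (List.mem_filter.mp hmS).1
  have hmP : m ∈ P.support := by
    have := (List.mem_filter.mp hmS).2; simpa using this
  have key : ∀ w, w ∈ (treePath T hT m z).support → w ∈ P.support → w = m := by
    intro w hw hwP
    rw [← tp_dropUntil hT hmQ] at hw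
    rcases List.mem_cons.mp ((Q.dropUntil m hmQ).support_eq_cons ▸ hw) with h | h
    · exact h
    · exfalso
      have hdecomp : Q.support
          = (Q.takeUntil m hmQ).support ++ (Q.dropUntil m hmQ).support.tail := by
        conv_lhs => rw [← Walk.take_spec Q hmQ]
        rw [Walk.support_append]
      have hwB : w ∈ (Q.dropUntil m hmQ).support.tail.filter
          (fun u => decide (u ∈ P.support)) := by
        rw [List.mem_filter]; exact ⟨h, by simpa using hwP⟩
      have hBne : ((Q.dropUntil m hmQ).support.tail.filter
          (fun u => decide (u ∈ P.support))) ≠ [] := List.ne_nil_of_mem hwB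
      have hSdecomp : S = (Q.takeUntil m hmQ).support.filter (fun u => decide (u ∈ P.support))
          ++ (Q.dropUntil m hmQ).support.tail.filter (fun u => decide (u ∈ P.support)) := by
        rw [hS, hdecomp, List.filter_append]
      have hlast : S.getLast? = ((Q.dropUntil m hmQ).support.tail.filter
          (fun u => decide (u ∈ P.support))).getLast? := by
        rw [hSdecomp, List.getLast?_append]
        cases hB : ((Q.dropUntil m hmQ).support.tail.filter
            (fun u => decide (u ∈ P.support))).getLast? with
        | none => exact absurd (List.getLast?_eq_none_iff.mp hB) hBne
        | some b => simp
      have hmB : m ∈ (Q.dropUntil m hmQ).support.tail := by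
        have := List.mem_of_getLast? (hlast ▸ hm)
        exact (List.mem_filter.mp this).1
      have hnd : ((Q.takeUntil m hmQ).support ++ (Q.dropUntil m hmQ).support.tail).Nodup := by
        rw [← hdecomp]; exact (tp_isPath hT c z).support_nodup
      exact (List.nodup_append'.mp hnd).2.2 (Walk.end_mem_support _) hmB
  refine ⟨m, hmP, hmQ, ?_, key⟩
  have hrev : ((P.dropUntil m hmP).reverse.append (treePath T hT m z)).IsPath := by
    refine append_isPath ((tp_isPath hT c y).dropUntil hmP).reverse (tp_isPath hT m z) ?_
    intro u hu hu'
    rw [Walk.support_reverse, List.mem_reverse] at hu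
    exact key u hu' (Walk.support_dropUntil_subset P hmP hu)
  rw [← tp_unique hT _ hrev, Walk.mem_support_append_iff]
  left
  exact Walk.end_mem_support _

/-- median: three split equations. -/
lemma median (x y z : V) : ∃ m,
    treeDist T hT lam x y = treeDist T hT lam x m + treeDist T hT lam m y ∧
    treeDist T hT lam x z = treeDist T hT lam x m + treeDist T hT lam m z ∧
    treeDist T hT lam y z = treeDist T hT lam y m + treeDist T hT lam m z := by
  obtain ⟨m, h1, h2, h3, -⟩ := gate hT x y z
  exact ⟨m, dist_split hT lam h1, dist_split hT lam h2, dist_split hT lam h3⟩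

lemma dist_zero {x y : V} (h : treeDist T hT lam x y = 0) (z : V) :
    treeDist T hT lam x z = treeDist T hT lam y z := by
  obtain ⟨m, h1, h2, h3⟩ := median hT lam x y z
  have hsym : treeDist T hT lam y m = treeDist T hT lam m y := dist_symm hT lam y m
  omega

lemma order_or {c y u v : V} (hu : u ∈ (treePath T hT c y).support)
    (hv : v ∈ (treePath T hT c y).support) :
    u ∈ (treePath T hT c v).support ∨ v ∈ (treePath T hT c u).support := by
  set P := treePath T hT c y with hP
  have hdecomp : P.support = (P.takeUntil v hv).support ++ (P.dropUntil v hv).support.tail := by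
    conv_lhs => rw [← Walk.take_spec P hv]
    rw [Walk.support_append]
  rw [hdecomp] at hu
  rcases List.mem_append.mp hu with h | h
  · left; rw [← tp_takeUntil hT hv]; exact h
  · right
    have h' : u ∈ (P.dropUntil v hv).support := by
      rw [(P.dropUntil v hv).support_eq_cons]; exact List.mem_cons_of_mem _ h
    have hW : ((P.takeUntil v hv).append ((P.dropUntil v hv).takeUntil u h')).IsPath := by
      refine append_isPath ((tp_isPath hT c y).takeUntil hv)
        (((tp_isPath hT c y).dropUntil hv).takeUntil h') ?_
      intro w hw hw'
      exact take_drop_inter (tp_isPath hT c y) hv w hw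
        (Walk.support_takeUntil_subset _ h' hw')
    rw [← tp_unique hT _ hW, Walk.mem_support_append_iff]
    left
    exact Walk.end_mem_support _


set_option maxHeartbeats 1000000 in
/-- The four-point step: from the given five distances, the sixth is forced. -/
lemma quad (a c e b : V) (A : ℕ)
    (h1 : treeDist T hT lam a c = A) (h2 : treeDist T hT lam a e = A + 2)
    (h3 : treeDist T hT lam c e = 2) (h4 : treeDist T hT lam c b = 4)
    (h5 : treeDist T hT lam e b = 2) : treeDist T hT lam a b = A + 4 := by
  classical
  obtain ⟨u, huP, huCA, huEA, hugate⟩ := gate hT c e a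
  obtain ⟨v, hvP, hvCB, hvEB, hvgate⟩ := gate hT c e b
  have s1 := dist_split hT lam huP
  have s2 := dist_split hT lam huCA
  have s3 := dist_split hT lam huEA
  have t1 := dist_split hT lam hvP
  have t2 := dist_split hT lam hvCB
  have t3 := dist_split hT lam hvEB
  have q1 : treeDist T hT lam u e = treeDist T hT lam e u := dist_symm hT lam u e
  have q2 : treeDist T hT lam v e = treeDist T hT lam e v := dist_symm hT lam v e
  have q3 : treeDist T hT lam a c = treeDist T hT lam c a := dist_symm hT lam a c
  have q4 : treeDist T hT lam a e = treeDist T hT lam e a := dist_symm hT lam a e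
  have hcu : treeDist T hT lam c u = 0 := by omega
  have hua : treeDist T hT lam u a = A := by omega
  have hcv : treeDist T hT lam c v = 2 := by omega
  have hvb : treeDist T hT lam v b = 2 := by omega
  have huvne : u ≠ v := by
    intro h; rw [h] at hcu; omega
  rcases order_or hT huP hvP with hOr | hOr
  swap
  · exfalso
    have := dist_split hT lam hOr
    omega
  have duv : treeDist T hT lam u v = 2 := by
    have := dist_split hT lam hOr
    omega
  -- every vertex of the path from u to v lies on the path from c to e
  have hseg : ∀ w, w ∈ (treePath T hT u v).support → w ∈ (treePath T hT c e).support := by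
    intro w hw
    rw [← tp_dropUntil hT hOr] at hw
    have hw2 : w ∈ (treePath T hT c v).support :=
      Walk.support_dropUntil_subset _ hOr hw
    rw [← tp_takeUntil hT hvP] at hw2
    exact Walk.support_takeUntil_subset _ hvP hw2
  -- the path from u to b passes through v
  have hW2 : ((treePath T hT u v).append (treePath T hT v b)).IsPath := by
    refine append_isPath (tp_isPath hT u v) (tp_isPath hT v b) ?_
    intro w hw hw'
    exact hvgate w hw' (hseg w hw)
  have hW2eq : (treePath T hT u v).append (treePath T hT v b) = treePath T hT u b :=
    tp_unique hT _ hW2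
  have hvub : v ∈ (treePath T hT u b).support := by
    rw [← hW2eq, Walk.mem_support_append_iff]
    left; exact Walk.end_mem_support _
  have dub : treeDist T hT lam u b = 4 := by
    have := dist_split hT lam hvub
    omega
  have hub_sup : ∀ w, w ∈ (treePath T hT u b).support →
      w ∈ (treePath T hT u v).support ∨ w ∈ (treePath T hT v b).support := by
    intro w hw
    rw [← hW2eq, Walk.mem_support_append_iff] at hw
    exact hw
  -- the path from a to b passes through u
  have hint1 : ∀ w, w ∈ (treePath T hT a u).support → w ∈ (treePath T hT u b).support →
      w = u := by
    intro w hw hw'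
    have hwua : w ∈ (treePath T hT u a).support := mem_support_symm hT hw
    rcases hub_sup w hw' with h | h
    · exact hugate w hwua (hseg w h)
    · by_cases hwP : w ∈ (treePath T hT c e).support
      · exact hugate w hwua hwP
      · exfalso
        -- two different paths from w to v
        have htwu : treePath T hT w u = ((treePath T hT u a).takeUntil w hwua).reverse := by
          rw [eq_comm]
          exact tp_unique hT _ ((tp_isPath hT u a).takeUntil hwua).reverse
        have hX : ((treePath T hT w u).append (treePath T hT u v)).IsPath := by
          refine append_isPath (tp_isPath hT w u) (tp_isPath hT u v) ?_
          intro t ht ht'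
          rw [htwu, Walk.support_reverse, List.mem_reverse] at ht
          have : t ∈ (treePath T hT u a).support :=
            Walk.support_takeUntil_subset _ hwua ht
          exact hugate t this (hseg t ht')
        have hXeq : (treePath T hT w u).append (treePath T hT u v) = treePath T hT w v :=
          tp_unique hT _ hX
        have huwv : u ∈ (treePath T hT w v).support := by
          rw [← hXeq, Walk.mem_support_append_iff]
          left; exact Walk.end_mem_support _
        have hY : treePath T hT w v = ((treePath T hT v b).takeUntil w h).reverse := by
          rw [eq_comm]
          exact tp_unique hT _ ((tp_isPath hT v b).takeUntil h).reverse
        rw [hY, Walk.support_reverse, List.mem_reverse] at huwv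
        have huvb : u ∈ (treePath T hT v b).support :=
          Walk.support_takeUntil_subset _ h huwv
        exact huvne (hvgate u huvb huP)
  have hW1 : ((treePath T hT a u).append (treePath T hT u b)).IsPath :=
    append_isPath (tp_isPath hT a u) (tp_isPath hT u b) hint1
  have hW1eq : (treePath T hT a u).append (treePath T hT u b) = treePath T hT a b :=
    tp_unique hT _ hW1
  have huab : u ∈ (treePath T hT a b).support := by
    rw [← hW1eq, Walk.mem_support_append_iff]
    left; exact Walk.end_mem_support _
  have := dist_split hT lam huab
  have : treeDist T hT lam a u = treeDist T hT lam u a := dist_symm hT lam a u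
  omega

end Aux

open Fin.NatCast Fin.CommRing in
/-- For p ≥ 5 the cycle C_p cannot be explained w.r.t. the exactly-2-relation by any
weighted tree (whether or not distinct leaves may be at distance 0). -/
theorem stmt13 (p : ℕ) (hp : 5 ≤ p) : ¬ Explainable (cycleGraph p) 2 := by
  rintro ⟨V, _, T, hT, lam, f, hinj, hleaf, hadj⟩
  classical
  haveI : NeZero p := ⟨by omega⟩
  -- basic `Fin p` arithmetic facts
  have hneg : ∀ t : ℕ, t ≤ p → -((t : ℕ) : Fin p) = ((p - t : ℕ) : Fin p) := by
    intro t ht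
    have h0 : (((p - t : ℕ) : Fin p) + ((t : ℕ) : Fin p)) = 0 := by
      rw [← Nat.cast_add, Nat.sub_add_cancel ht, Fin.natCast_self]
    exact neg_eq_of_add_eq_zero_left h0
  have F1 : ∀ j : ℕ, (cycleGraph p).Adj (j : Fin p) ((j + 1 : ℕ) : Fin p) := by
    intro j
    rw [cycleGraph_adj']
    right
    have : ((j + 1 : ℕ) : Fin p) - ((j : ℕ) : Fin p) = ((1 : ℕ) : Fin p) := by
      push_cast
      ring
    rw [this, Fin.val_natCast, Nat.mod_eq_of_lt (by omega)]
  have Fno : ∀ (j t : ℕ), 2 ≤ t → t ≤ 3 →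
      ¬ (cycleGraph p).Adj (j : Fin p) ((j + t : ℕ) : Fin p) := by
    intro j t h2 h3 hA
    rw [cycleGraph_adj'] at hA
    have e1 : ((j + t : ℕ) : Fin p) - ((j : ℕ) : Fin p) = ((t : ℕ) : Fin p) := by
      push_cast; ring
    have e2 : ((j : ℕ) : Fin p) - ((j + t : ℕ) : Fin p) = ((p - t : ℕ) : Fin p) := by
      rw [← hneg t (by omega)]
      push_cast; ring
    rw [e1, e2, Fin.val_natCast, Fin.val_natCast] at hA
    have m1 : t % p = t := Nat.mod_eq_of_lt (by omega)
    have m2 : (p - t) % p = p - t := Nat.mod_eq_of_lt (by omega)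
    omega
  set x : ℕ → V := fun j => f ((j : ℕ) : Fin p) with hx
  have D1 : ∀ j : ℕ, treeDist T hT lam (x j) (x (j + 1)) = 2 :=
    fun j => (hadj _ _).mp (F1 j)
  have Dno : ∀ j t : ℕ, 2 ≤ t → t ≤ 3 → treeDist T hT lam (x j) (x (j + t)) ≠ 2 :=
    fun j t h2 h3 h => Fno j t h2 h3 ((hadj _ _).mpr h)
  -- distance between second neighbours on the cycle is 4
  have Tri : ∀ j : ℕ, treeDist T hT lam (x j) (x (j + 2)) = 4 := by
    intro j
    obtain ⟨m, m1, m2, m3⟩ := Aux.median hT lam (x j) (x (j + 1)) (x (j + 2))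
    have e1 : treeDist T hT lam (x j) (x (j + 1)) = 2 := D1 j
    have e2 : treeDist T hT lam (x (j + 1)) (x (j + 2)) = 2 := D1 (j + 1)
    have hsym : treeDist T hT lam (x (j + 1)) m = treeDist T hT lam m (x (j + 1)) :=
      Aux.dist_symm hT lam _ _
    have hne : treeDist T hT lam (x j) (x (j + 2)) ≠ 2 := Dno j 2 (by omega) (by omega)
    by_cases hD : treeDist T hT lam (x j) (x (j + 2)) = 0
    · exfalso
      have h23 : treeDist T hT lam (x (j + 2)) (x (j + 3)) = 2 := D1 (j + 2)
      have h03 : treeDist T hT lam (x j) (x (j + 3))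
          = treeDist T hT lam (x (j + 2)) (x (j + 3)) := Aux.dist_zero hT lam hD _
      exact Dno j 3 (by omega) (by omega) (by omega)
    · omega
  -- main induction along the cycle
  have claim : ∀ j : ℕ, 1 ≤ j → j ≤ p - 1 → treeDist T hT lam (x 0) (x j) = 2 * j := by
    intro j
    induction j using Nat.strong_induction_on with
    | _ j ih =>
      intro h1 h2
      rcases j with _ | _ | _ | k
      · omega
      · have e : treeDist T hT lam (x 0) (x (0 + 1)) = 2 := D1 0
        omega
      · have e : treeDist T hT lam (x 0) (x (0 + 1 + 1)) = 4 := Tri 0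
        omega
      · have i1 : treeDist T hT lam (x 0) (x (k + 1)) = 2 * (k + 1) :=
          ih (k + 1) (by omega) (by omega) (by omega)
        have i2 : treeDist T hT lam (x 0) (x (k + 1 + 1)) = 2 * (k + 2) :=
          ih (k + 2) (by omega) (by omega) (by omega)
        have h3 : treeDist T hT lam (x (k + 1)) (x (k + 1 + 1)) = 2 := D1 (k + 1)
        have h4 : treeDist T hT lam (x (k + 1)) (x (k + 1 + 1 + 1)) = 4 := Tri (k + 1)
        have h5 : treeDist T hT lam (x (k + 1 + 1)) (x (k + 1 + 1 + 1)) = 2 := D1 (k + 2)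
        have hq := Aux.quad hT lam (x 0) (x (k + 1)) (x (k + 1 + 1)) (x (k + 1 + 1 + 1))
          (2 * (k + 1)) i1 (by omega) h3 h4 h5
        omega
  have hend : treeDist T hT lam (x 0) (x (p - 1)) = 2 * (p - 1) :=
    claim (p - 1) (by omega) (by omega)
  have hlast : treeDist T hT lam (x (p - 1)) (x p) = 2 := by
    have h := D1 (p - 1)
    have hpp : p - 1 + 1 = p := by omega
    rwa [hpp] at h
  have hx0 : x p = x 0 := by
    rw [hx]
    simp
  rw [hx0] at hlast
  have hsymm := Aux.dist_symm hT lam (x 0) (x (p - 1))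
  omega
end

section
/- Let G be a finite graph in which neither C_4 nor K_4 − e occurs as an induced subgraph and which is chordal. If G contains a Hamiltonian cycle, then G is a complete graph. -/
open SimpleGraph

lemma diamondEmb {α : Type} (G : SimpleGraph α) {a b c d : α}
    (hne : a ≠ b) (hnadj : ¬ G.Adj a b)
    (hac : G.Adj a c) (had : G.Adj a d) (hbc : G.Adj b c) (hbd : G.Adj b d) (hcd : G.Adj c d) :
    Nonempty (((⊤ : SimpleGraph (Fin 4)).deleteEdges {s(0, 1)}) ↪g G) := by
  have h1 : a ≠ c := hac.ne
  have h2 : a ≠ d := had.ne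
  have h3 : b ≠ c := hbc.ne
  have h4 : b ≠ d := hbd.ne
  have h5 : c ≠ d := hcd.ne
  refine ⟨⟨⟨![a,b,c,d], ?_⟩, ?_⟩⟩
  · intro u v h
    fin_cases u <;> fin_cases v <;> simp_all
  · intro u v
    change G.Adj (![a,b,c,d] u) (![a,b,c,d] v) ↔ _
    fin_cases u <;> fin_cases v <;>
      simp [Function.Embedding.coeFn_mk, RelEmbedding.coe_mk, deleteEdges_adj, Sym2.eq, Sym2.rel_iff', G.adj_comm, hnadj, hne, hac, had, hbc, hbd, hcd,
        fun h => hnadj (G.adj_symm h)]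

lemma keyLemma {α : Type} (G : SimpleGraph α) (n : ℕ) (g : ℕ → α)
    (hg_ne : ∀ a b, a < b → b < a + n → g a ≠ g b)
    (hdiamond : IsEmpty (((⊤ : SimpleGraph (Fin 4)).deleteEdges {s(0, 1)}) ↪g G))
    (hchordal : ∀ k, 4 ≤ k → IsEmpty (cycleGraph k ↪g G)) :
    ∀ m, 3 ≤ m → ∀ q : ℕ → ℕ,
      (∀ i j, i < j → j < m → q i < q j) →
      q (m-1) < q 0 + n →
      (∀ i, i + 1 < m → G.Adj (g (q i)) (g (q (i+1)))) →
      G.Adj (g (q 0)) (g (q (m-1))) →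
      ∀ i j, i < j → j < m → G.Adj (g (q i)) (g (q j)) := by
  intro m
  induction m using Nat.strong_induction_on with
  | _ m ih =>
  intro h3 q hmono hwin hadj hclose
  have hmle : ∀ i j, i ≤ j → j < m → q i ≤ q j := by
    intro i j hij hj
    rcases eq_or_lt_of_le hij with rfl | h
    · exact le_rfl
    · exact (hmono _ _ h hj).le
  have hwin' : ∀ i j, i < m → j < m → q j < q i + n := by
    intro i j hi hj
    have h1 := hmle 0 i (by omega) hi
    have h2 := hmle j (m-1) (by omega) (by omega)
    omega
  have hne : ∀ i j, i < j → j < m → g (q i) ≠ g (q j) := fun i j hij hj =>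
    hg_ne _ _ (hmono i j hij hj) (hwin' i j (by omega) hj)
  intro i j hij hjm
  rcases eq_or_lt_of_le h3 with h3' | h4
  · -- m = 3
    have hc : (i = 0 ∧ j = 1) ∨ (i = 1 ∧ j = 2) ∨ (i = 0 ∧ j = 2) := by omega
    rcases hc with ⟨rfl, rfl⟩ | ⟨rfl, rfl⟩ | ⟨rfl, rfl⟩
    · exact hadj 0 (by omega)
    · exact hadj 1 (by omega)
    · have h2 : m - 1 = 2 := by omega
      rw [← h2]; exact hclose
  · -- m ≥ 4
    by_cases hch : ∃ c d, c < d ∧ d < m ∧ d ≠ c + 1 ∧ ¬(c = 0 ∧ d = m - 1) ∧ G.Adj (g (q c)) (g (q d))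
    · obtain ⟨c, d, hcd, hdm, hdc1, hnotcd, hchord⟩ := hch
      have hd2 : c + 2 ≤ d := by omega
      -- arc 1 : indices c..d
      have A1 := ih (d - c + 1) (by omega) (by omega) (fun i => q (c + i))
        (fun i j hij hj => hmono (c+i) (c+j) (by omega) (by omega))
        (by
          rw [show c + (d - c + 1 - 1) = d from by omega, Nat.add_zero]
          exact hwin' c d (by omega) (by omega))
        (fun i hi => hadj (c+i) (by omega))
        (by
          rw [show c + (d - c + 1 - 1) = d from by omega, Nat.add_zero]
          exact hchord)
      have A1' : ∀ i j, c ≤ i → i < j → j ≤ d → G.Adj (g (q i)) (g (q j)) := by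
        intro i j h1 h2 h3
        have := A1 (i - c) (j - c) (by omega) (by omega)
        rwa [show c + (i - c) = i from by omega, show c + (j - c) = j from by omega] at this
      -- arc 2 : indices 0..c then d..m-1
      have A2 := ih (m - d + c + 1) (by omega) (by omega)
        (fun i => if i ≤ c then q i else q (i + (d - c - 1)))
        (by
          intro i j hij hj
          by_cases hjc : j ≤ c
          · rw [if_pos (by omega : i ≤ c), if_pos hjc]
            exact hmono i j hij (by omega)
          · by_cases hic : i ≤ c
            · rw [if_pos hic, if_neg hjc]
              have h1 : q i ≤ q c := hmle i c hic (by omega)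
              have h2 : q c < q (j + (d - c - 1)) := hmono c (j + (d-c-1)) (by omega) (by omega)
              omega
            · rw [if_neg hic, if_neg hjc]
              exact hmono _ _ (by omega) (by omega))
        (by
          rw [if_neg (by omega : ¬ (m - d + c + 1 - 1 ≤ c)), if_pos (Nat.zero_le c),
            show m - d + c + 1 - 1 + (d - c - 1) = m - 1 from by omega]
          exact hwin)
        (by
          intro i hi
          by_cases h1 : i + 1 ≤ c
          · rw [if_pos (by omega : i ≤ c), if_pos h1]
            exact hadj i (by omega)
          · by_cases h2 : i ≤ c
            · have hic : i = c := by omega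
              subst hic
              rw [if_pos le_rfl, if_neg h1, show i + 1 + (d - i - 1) = d from by omega]
              exact hchord
            · rw [if_neg h2, if_neg h1,
                show i + 1 + (d - c - 1) = (i + (d - c - 1)) + 1 from by omega]
              exact hadj _ (by omega))
        (by
          rw [if_pos (Nat.zero_le c), if_neg (by omega : ¬ (m - d + c + 1 - 1 ≤ c)),
            show m - d + c + 1 - 1 + (d - c - 1) = m - 1 from by omega]
          exact hclose)
      have A2'' : ∀ i j, i < j → j ≤ c → G.Adj (g (q i)) (g (q j)) := by
        intro i j h1 h2
        have := A2 i j h1 (by omega)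
        rwa [if_pos (by omega : i ≤ c), if_pos h2] at this
      have A2' : ∀ i j, i ≤ c → c < j → j ≤ m - d + c → G.Adj (g (q i)) (g (q (j + (d - c - 1)))) := by
        intro i j h1 h2 h3
        have := A2 i j (by omega) (by omega)
        rwa [if_pos h1, if_neg (by omega)] at this
      have A2''' : ∀ i j, c < i → i < j → j ≤ m - d + c →
          G.Adj (g (q (i + (d - c - 1)))) (g (q (j + (d - c - 1)))) := by
        intro i j h1 h2 h3
        have := A2 i j h2 (by omega)
        rwa [if_neg (by omega), if_neg (by omega)] at this
      have hcase : j ≤ c ∨ d ≤ i ∨ (i ≤ c ∧ d ≤ j) ∨ (c ≤ i ∧ j ≤ d) ∨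
          (i < c ∧ c < j ∧ j < d) ∨ (c < i ∧ i < d ∧ d < j) := by omega
      rcases hcase with h | h | ⟨h1, h2⟩ | ⟨h1, h2⟩ | ⟨h1, h2, h5⟩ | ⟨h1, h2, h5⟩
      · exact A2'' i j hij h
      · have := A2''' (i - (d - c - 1)) (j - (d - c - 1)) (by omega) (by omega) (by omega)
        rwa [show i - (d - c - 1) + (d - c - 1) = i from by omega,
          show j - (d - c - 1) + (d - c - 1) = j from by omega] at this
      · have := A2' i (j - (d - c - 1)) h1 (by omega) (by omega)
        rwa [show j - (d - c - 1) + (d - c - 1) = j from by omega] at this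
      · exact A1' i j h1 hij h2
      · -- diamond case i < c < j < d
        by_contra hnadj
        have e1 : G.Adj (g (q i)) (g (q c)) := A2'' i c h1 le_rfl
        have e2 : G.Adj (g (q i)) (g (q d)) := by
          have := A2' i (c+1) (by omega) (by omega) (by omega)
          rwa [show c + 1 + (d - c - 1) = d from by omega] at this
        have e3 : G.Adj (g (q c)) (g (q j)) := A1' c j le_rfl h2 (by omega)
        have e4 : G.Adj (g (q j)) (g (q d)) := A1' j d (by omega) h5 le_rfl
        obtain ⟨e⟩ := diamondEmb G (hne i j hij hjm) hnadj e1 e2 e3.symm e4 hchord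
        exact hdiamond.false e
      · -- diamond case c < i < d < j
        by_contra hnadj
        have e1 : G.Adj (g (q c)) (g (q i)) := A1' c i le_rfl h1 (by omega)
        have e2 : G.Adj (g (q i)) (g (q d)) := A1' i d (by omega) h2 le_rfl
        have e3 : G.Adj (g (q c)) (g (q j)) := by
          have := A2' c (j - (d - c - 1)) le_rfl (by omega) (by omega)
          rwa [show j - (d - c - 1) + (d - c - 1) = j from by omega] at this
        have e4 : G.Adj (g (q d)) (g (q j)) := by
          have := A2''' (c + 1) (j - (d - c - 1)) (by omega) (by omega) (by omega)
          rwa [show c + 1 + (d - c - 1) = d from by omega,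
            show j - (d - c - 1) + (d - c - 1) = j from by omega] at this
        obtain ⟨e⟩ := diamondEmb G (hne i j hij hjm) hnadj e1.symm e2 e3.symm e4.symm hchord
        exact hdiamond.false e
    · -- no chord : induced cycle, contradiction
      exfalso
      push_neg at hch
      obtain ⟨k, rfl⟩ : ∃ k, m = k + 2 := ⟨m - 2, by omega⟩
      set f : Fin (k+2) → α := fun u => g (q u.val) with hf
      have hfinj : Function.Injective f := by
        intro u v huv
        by_contra hne'
        have hv : u.val ≠ v.val := fun h => hne' (Fin.ext h)
        rcases Nat.lt_or_ge u.val v.val with h | h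
        · exact hne u.val v.val h v.isLt huv
        · exact hne v.val u.val (by omega) u.isLt huv.symm
      have hstep : ∀ u : Fin (k+2), G.Adj (f u) (f (u+1)) := by
        intro u
        show G.Adj (g (q u.val)) (g (q (u+1).val))
        rcases Nat.lt_or_ge (u.val + 1) (k+2) with h | h
        · rw [Fin.val_add_one_of_lt (by rw [Fin.lt_iff_val_lt_val, Fin.val_last]; omega)]
          exact hadj u.val h
        · have hu : u = Fin.last (k+1) := by
            apply Fin.ext
            rw [Fin.val_last]
            have := u.isLt
            omega
          rw [hu]
          simp only [Fin.last_add_one, Fin.val_zero, Fin.val_last]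
          exact (hclose).symm
      have main : ∀ u v : Fin (k+2), u.val < v.val → G.Adj (f u) (f v) → (cycleGraph (k+2)).Adj u v := by
        intro u v huv hadjuv
        by_cases hc1 : v.val = u.val + 1
        · have hv1 : v = u + 1 := by
            apply Fin.ext
            rw [hc1, Fin.val_add_one_of_lt (by
              rw [Fin.lt_iff_val_lt_val, Fin.val_last]
              have := v.isLt
              omega)]
          rw [cycleGraph_adj]
          right
          rw [hv1, add_sub_cancel_left]
        · by_cases hc2 : u.val = 0 ∧ v.val = k + 1
          · rw [cycleGraph_adj]
            left
            have hu0 : u = 0 := Fin.ext (by simp [hc2.1])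
            have hv : v = Fin.last (k+1) := Fin.ext (by simp [hc2.2])
            have hvm : v = -1 := by
              rw [hv]
              have h0 : Fin.last (k+1) + 1 = 0 := Fin.last_add_one (k+1)
              exact eq_neg_of_add_eq_zero_left h0
            rw [hu0, hvm]
            abel
          · have himp : u.val = 0 → v.val ≠ k + 2 - 1 := fun h0 h1 => hc2 ⟨h0, by omega⟩
            exact absurd hadjuv (hch u.val v.val huv v.isLt (fun hh => hc1 hh) himp)
      have emb : cycleGraph (k+2) ↪g G := by
        refine ⟨⟨f, hfinj⟩, ?_⟩
        intro u v
        constructor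
        · intro hadjuv
          rcases lt_trichotomy u.val v.val with h | h | h
          · exact main u v h hadjuv
          · have : u = v := Fin.ext h
            subst this
            exact absurd hadjuv (G.loopless.irrefl _)
          · exact (main v u h hadjuv.symm).symm
        · intro hcyc
          rw [cycleGraph_adj] at hcyc
          rcases hcyc with h | h
          · have : u = v + 1 := by rw [← h]; abel
            rw [this]
            exact (hstep v).symm
          · have : v = u + 1 := by rw [← h]; abel
            rw [this]
            exact hstep u
      exact (hchordal (k+2) (by omega)).false emb

/-- A finite graph with no induced C_4, no induced K_4 − e, and chordal (no induced
cycle of length ≥ 4), which contains a Hamiltonian cycle, is complete. -/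
theorem stmt15 {α : Type} [Fintype α] [DecidableEq α] (G : SimpleGraph α)
    (hC4 : IsEmpty (cycleGraph 4 ↪g G))
    (hdiamond : IsEmpty (((⊤ : SimpleGraph (Fin 4)).deleteEdges {s(0, 1)}) ↪g G))
    (hchordal : ∀ n, 4 ≤ n → IsEmpty (cycleGraph n ↪g G))
    (hham : G.IsHamiltonian) :
    ∀ x y : α, x ≠ y → G.Adj x y := by
  intro x y hxy
  by_cases hcard : Fintype.card α = 1
  · have hsub : Subsingleton α := Fintype.card_le_one_iff_subsingleton.mp (by omega)
    exact absurd (Subsingleton.elim x y) hxy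
  obtain ⟨v, p, hp⟩ := hham hcard
  set n := Fintype.card α with hn
  have hlen : p.length = n := hp.length_eq
  have hn3 : 3 ≤ n := hlen ▸ hp.isCycle.three_le_length
  set g : ℕ → α := fun k => p.getVert (k % n) with hg
  have hgv : ∀ k, k < n → g k = p.getVert k := by
    intro k hk; simp [hg, Nat.mod_eq_of_lt hk]
  have hvn : p.getVert n = v := by rw [← hlen]; exact p.getVert_length
  have hadjg : ∀ k, G.Adj (g k) (g (k+1)) := by
    intro k
    have hr : k % n < n := Nat.mod_lt _ (by omega)
    show G.Adj (p.getVert (k % n)) (p.getVert ((k+1) % n))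
    rcases Nat.lt_or_ge (k % n + 1) n with h | h
    · have h2 : (k+1) % n = k % n + 1 := by
        rw [Nat.add_mod, Nat.mod_eq_of_lt (show 1 < n by omega), Nat.mod_eq_of_lt h]
      rw [h2]
      exact p.adj_getVert_succ (by omega)
    · have he : k % n = n - 1 := by omega
      have h2 : (k+1) % n = 0 := by
        rw [Nat.add_mod, Nat.mod_eq_of_lt (show 1 < n by omega), he,
          Nat.sub_add_cancel (by omega : 1 ≤ n), Nat.mod_self]
      rw [he, h2, p.getVert_zero]
      have h4 := p.adj_getVert_succ (i := n - 1) (by omega)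
      have h5 : p.getVert (n - 1 + 1) = v := by
        rw [Nat.sub_add_cancel (by omega : 1 ≤ n)]; exact hvn
      rwa [h5] at h4
  have hsurj : Function.Surjective (fun i : Fin n => g i.val) := by
    intro z
    have hz : z ∈ p.support := hp.mem_support z
    obtain ⟨i, hiz, hi⟩ := SimpleGraph.Walk.mem_support_iff_exists_getVert.mp hz
    rcases Nat.lt_or_ge i n with h | h
    · exact ⟨⟨i, h⟩, by simpa [hgv i h] using hiz⟩
    · have hin : i = n := by omega
      refine ⟨⟨0, by omega⟩, ?_⟩
      simp only [hgv 0 (by omega), p.getVert_zero]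
      rw [← hiz, hin]; exact hvn.symm
  have hbij : Function.Bijective (fun i : Fin n => g i.val) := by
    rw [Fintype.bijective_iff_surjective_and_card]
    exact ⟨hsurj, by simp [hn]⟩
  have hginj : ∀ a b, g a = g b → a % n = b % n := by
    intro a b h
    have h1 : g (a % n) = g (b % n) := by
      show p.getVert (a % n % n) = p.getVert (b % n % n)
      rw [Nat.mod_mod_of_dvd a (dvd_refl n), Nat.mod_mod_of_dvd b (dvd_refl n)]
      exact h
    have := hbij.injective (a₁ := ⟨a % n, Nat.mod_lt _ (by omega)⟩)
      (a₂ := ⟨b % n, Nat.mod_lt _ (by omega)⟩) (by simpa using h1)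
    simpa [Fin.ext_iff] using this
  have hg_ne : ∀ a b, a < b → b < a + n → g a ≠ g b := by
    intro a b h1 h2 he
    have hmod : a ≡ b [MOD n] := hginj a b he
    have hdvd : n ∣ b - a := (Nat.modEq_iff_dvd' (by omega)).mp hmod
    have := Nat.le_of_dvd (by omega) hdvd
    omega
  have hstar : G.Adj (g 0) (g (n-1)) := by
    have h1 := p.adj_getVert_succ (i := n-1) (by omega : n - 1 < p.length)
    rw [show n - 1 + 1 = n from by omega, hvn] at h1
    rw [hgv 0 (by omega), p.getVert_zero, hgv (n-1) (by omega)]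
    exact h1.symm
  have hcycle := keyLemma G n g hg_ne hdiamond hchordal n (by omega) (fun i => i)
    (fun i j h _ => h) (by omega) (fun i _ => hadjg i) hstar
  obtain ⟨a, ha⟩ := hsurj x
  obtain ⟨b, hb⟩ := hsurj y
  simp only at ha hb
  have hne2 : a.val ≠ b.val := fun he => hxy (by rw [← ha, ← hb, he])
  rcases Nat.lt_or_ge a.val b.val with h | h
  · have := hcycle a.val b.val h b.isLt
    rwa [ha, hb] at this
  · have := hcycle b.val a.val (by omega) a.isLt
    rw [ha, hb] at this
    exact this.symm
end
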